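/- Let K be a compact metric space and suppose m^{(0)}, m^{(1)}, m^{(2)} are finite nonnegative Borel measures on K such that for every Borel set Ω ⊂ K, m^{(1)}(Ω)² ≤ m^{(0)}(Ω)·m^{(2)}(Ω). Then m^{(1)} is absolutely continuous with respect to m^{(0)}, so there exists f ∈ L¹(K, m^{(0)}) with m^{(1)} = f·m^{(0)}; moreover f ∈ L²(K, m^{(0)}) with f²·m^{(0)} ≤ m^{(2)} (as measures), so ∫ f² dm^{(0)} ≤ m^{(2)}(K). -/

import Mathlib

open MeasureTheory

private lemma eps_step {K : Type*} [MeasurableSpace K]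
    (m0 m1 m2 : Measure K) [IsFiniteMeasure m0] [IsFiniteMeasure m1] [IsFiniteMeasure m2]
    (h : ∀ Ω : Set K, MeasurableSet Ω → (m1 Ω) ^ 2 ≤ m0 Ω * m2 Ω)
    (hac : m1 ≪ m0)
    (Ω : Set K) (hΩ : MeasurableSet Ω)
    (ε : ENNReal) (hε0 : ε ≠ 0) (hεt : ε ≠ ⊤) :
    ∫⁻ x in Ω, (m1.rnDeriv m0 x) ^ 2 ∂m0
      ≤ m2 Ω + 2 * ε * m1 Set.univ + ε ^ 2 * m0 Set.univ := by
  set g := m1.rnDeriv m0 with hg_def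
  have hg : Measurable g := Measure.measurable_rnDeriv m1 m0
  -- partition
  set A : ℕ → Set K := fun i => Ω ∩ {x | ε * i ≤ g x} ∩ {x | g x < ε * (i + 1)} with hA_def
  have hAmeas : ∀ i, MeasurableSet (A i) := fun i =>
    ((hΩ.inter (measurableSet_le measurable_const hg)).inter
      (measurableSet_lt hg measurable_const))
  have hAsub : ∀ i, A i ⊆ Ω := fun i x hx => hx.1.1
  have hdisj' : ∀ i j, i < j → Disjoint (A i) (A j) := by
    intro i j hlt
    refine Set.disjoint_left.mpr fun x hxi hxj => ?_
    have h1 : g x < ε * (i + 1) := hxi.2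
    have h2 : ε * j ≤ g x := hxj.1.2
    have h3 : ε * ((i : ENNReal) + 1) ≤ ε * j := by
      gcongr
      exact_mod_cast (by exact_mod_cast Nat.succ_le_of_lt hlt : ((i+1 : ℕ) : ENNReal) ≤ j)
    exact absurd (lt_of_lt_of_le h1 (h3.trans h2)) (not_lt.mpr le_rfl)
  have hAdisj : Pairwise (Function.onFun Disjoint A) := by
    intro i j hij
    rcases hij.lt_or_gt with hlt | hlt
    · exact hdisj' i j hlt
    · exact (hdisj' j i hlt).symm
  have hcover : Ω ∩ {x | g x < ⊤} ⊆ ⋃ i, A i := by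
    intro x hx
    obtain ⟨hxΩ, hxfin⟩ := hx
    have hxfin' : g x ≠ ⊤ := ne_of_lt hxfin
    obtain ⟨n, hn⟩ := ENNReal.exists_nat_gt (r := g x / ε) (by
      simp [ENNReal.div_eq_top, hε0, hxfin'])
    have hn' : g x < ε * (n + 1) := by
      have : g x < n * ε := (ENNReal.div_lt_iff (Or.inl hε0) (Or.inl hεt)).mp hn
      calc g x < (n : ENNReal) * ε := this
        _ = ε * n := mul_comm _ _
        _ ≤ ε * (n + 1) := by gcongr; exact le_self_add
    have hP : ∃ m : ℕ, g x < ε * (m + 1) := ⟨n, hn'⟩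
    set i := Nat.find hP with hi_def
    refine Set.mem_iUnion.mpr ⟨i, ⟨⟨hxΩ, ?_⟩, Nat.find_spec hP⟩⟩
    show ε * (i : ENNReal) ≤ g x
    rcases Nat.eq_zero_or_pos i with hi0 | hipos
    · simp [hi0]
    · obtain ⟨k, hk⟩ := Nat.exists_eq_succ_of_ne_zero (Nat.pos_iff_ne_zero.mp hipos)
      have hnot : ¬ (g x < ε * (k + 1)) := Nat.find_min hP (by omega)
      have : ε * ((k : ENNReal) + 1) ≤ g x := not_lt.mp hnot
      calc ε * (i : ENNReal) = ε * ((k : ENNReal) + 1) := by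
            rw [hk]; push_cast; ring
        _ ≤ g x := this
  -- measure identities on each piece
  have hm1A : ∀ i, m1 (A i) = ∫⁻ x in A i, g x ∂m0 := fun i =>
    (Measure.setLIntegral_rnDeriv hac (A i)).symm
  have hlow : ∀ i, ε * i * m0 (A i) ≤ m1 (A i) := by
    intro i
    rw [hm1A i]
    calc ε * i * m0 (A i) = ∫⁻ _ in A i, ε * i ∂m0 := by rw [setLIntegral_const]
      _ ≤ ∫⁻ x in A i, g x ∂m0 := setLIntegral_mono hg (fun x hx => hx.1.2)
  have hkey : ∀ i, ∫⁻ x in A i, g x ^ 2 ∂m0 ≤ m2 (A i) + 2 * ε * m1 (A i) + ε ^ 2 * m0 (A i) := by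
    intro i
    have hup : ∫⁻ x in A i, g x ^ 2 ∂m0 ≤ (ε * (i + 1)) ^ 2 * m0 (A i) := by
      calc ∫⁻ x in A i, g x ^ 2 ∂m0 ≤ ∫⁻ _ in A i, (ε * (i + 1)) ^ 2 ∂m0 :=
            setLIntegral_mono measurable_const (fun x hx => by
              gcongr
              exact le_of_lt hx.2)
        _ = (ε * (i + 1)) ^ 2 * m0 (A i) := setLIntegral_const _ _
    have hexp : (ε * ((i : ENNReal) + 1)) ^ 2 * m0 (A i)
        = (ε * i) ^ 2 * m0 (A i) + 2 * ε * (ε * i * m0 (A i)) + ε ^ 2 * m0 (A i) := by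
      ring
    have hterm1 : (ε * (i : ENNReal)) ^ 2 * m0 (A i) ≤ m2 (A i) := by
      rcases eq_or_ne (m0 (A i)) 0 with h0 | h0
      · simp [h0]
      · have hfin : m0 (A i) ≠ ⊤ := measure_ne_top m0 _
        rw [← ENNReal.mul_le_mul_iff_left h0 hfin]
        calc (ε * i) ^ 2 * m0 (A i) * m0 (A i) = (ε * i * m0 (A i)) ^ 2 := by ring
          _ ≤ m1 (A i) ^ 2 := by gcongr; exact hlow i
          _ ≤ m0 (A i) * m2 (A i) := h (A i) (hAmeas i)
          _ = m2 (A i) * m0 (A i) := mul_comm _ _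
    have hterm2 : 2 * ε * (ε * i * m0 (A i)) ≤ 2 * ε * m1 (A i) := by
      gcongr; exact hlow i
    calc ∫⁻ x in A i, g x ^ 2 ∂m0 ≤ (ε * (i + 1)) ^ 2 * m0 (A i) := hup
      _ = (ε * i) ^ 2 * m0 (A i) + 2 * ε * (ε * i * m0 (A i)) + ε ^ 2 * m0 (A i) := hexp
      _ ≤ m2 (A i) + 2 * ε * m1 (A i) + ε ^ 2 * m0 (A i) :=
          add_le_add (add_le_add hterm1 hterm2) le_rfl
  -- reduce Ω to the union
  set U : Set K := ⋃ i, A i with hU_def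
  have hUmeas : MeasurableSet U := MeasurableSet.iUnion hAmeas
  have hUsub : U ⊆ Ω := Set.iUnion_subset hAsub
  have hnull : m0 (Ω \ U) = 0 := by
    have hsub : Ω \ U ⊆ {x | ¬ g x < ⊤} := by
      intro x hx
      by_contra hc
      exact hx.2 (hcover ⟨hx.1, not_not.mp hc⟩)
    exact measure_mono_null hsub (ae_iff.mp (Measure.rnDeriv_lt_top m1 m0))
  have hsplit : ∫⁻ x in Ω, g x ^ 2 ∂m0 = ∫⁻ x in U, g x ^ 2 ∂m0 := by
    have hΩeq : Ω = U ∪ (Ω \ U) := (Set.union_diff_cancel hUsub).symm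
    rw [hΩeq, lintegral_union (hΩ.diff hUmeas) Set.disjoint_sdiff_right,
      setLIntegral_measure_zero _ _ hnull, add_zero]
  rw [hsplit, hU_def, lintegral_iUnion hAmeas hAdisj]
  calc ∑' i, ∫⁻ x in A i, g x ^ 2 ∂m0
      ≤ ∑' i, (m2 (A i) + 2 * ε * m1 (A i) + ε ^ 2 * m0 (A i)) := ENNReal.tsum_le_tsum hkey
    _ = (∑' i, m2 (A i)) + 2 * ε * (∑' i, m1 (A i)) + ε ^ 2 * (∑' i, m0 (A i)) := by
        rw [ENNReal.tsum_add, ENNReal.tsum_add, ENNReal.tsum_mul_left, ENNReal.tsum_mul_left]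
    _ = m2 U + 2 * ε * m1 U + ε ^ 2 * m0 U := by
        rw [hU_def, measure_iUnion hAdisj hAmeas, measure_iUnion hAdisj hAmeas,
          measure_iUnion hAdisj hAmeas]
    _ ≤ m2 Ω + 2 * ε * m1 Set.univ + ε ^ 2 * m0 Set.univ :=
        add_le_add (add_le_add (measure_mono hUsub)
          (mul_le_mul' le_rfl (measure_mono (Set.subset_univ _))))
          (mul_le_mul' le_rfl (measure_mono (Set.subset_univ _)))

private lemma key_bound {K : Type*} [MeasurableSpace K]
    (m0 m1 m2 : Measure K) [IsFiniteMeasure m0] [IsFiniteMeasure m1] [IsFiniteMeasure m2]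
    (h : ∀ Ω : Set K, MeasurableSet Ω → (m1 Ω) ^ 2 ≤ m0 Ω * m2 Ω)
    (hac : m1 ≪ m0)
    (Ω : Set K) (hΩ : MeasurableSet Ω) :
    ∫⁻ x in Ω, (m1.rnDeriv m0 x) ^ 2 ∂m0 ≤ m2 Ω := by
  refine ENNReal.le_of_forall_pos_le_add fun δ hδ _ => ?_
  set C : ENNReal := m1 Set.univ + m0 Set.univ + 1 with hC_def
  have hC0 : C ≠ 0 := by simp [hC_def]
  have hCt : C ≠ ⊤ := by
    simp [hC_def, ENNReal.add_ne_top, measure_ne_top]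
  set ε : ENNReal := min 1 ((δ : ENNReal) / (3 * C)) with hε_def
  have hε0 : ε ≠ 0 := by
    simp only [hε_def, ne_eq, min_eq_iff]
    intro hmin
    rcases hmin with ⟨h1, _⟩ | ⟨h1, _⟩
    · exact one_ne_zero h1
    · rw [ENNReal.div_eq_zero_iff] at h1
      rcases h1 with h1 | h1
      · exact (ENNReal.coe_ne_zero.mpr (ne_of_gt hδ)) h1
      · exact (ENNReal.mul_ne_top (by simp) hCt) h1
  have hεt : ε ≠ ⊤ := ne_top_of_le_ne_top (by simp) (min_le_left _ _)
  have hε1 : ε ≤ 1 := min_le_left _ _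
  have hεδ : ε ≤ (δ : ENNReal) / (3 * C) := min_le_right _ _
  have step := eps_step m0 m1 m2 h hac Ω hΩ ε hε0 hεt
  have hm1C : m1 Set.univ ≤ C := by
    calc m1 Set.univ ≤ m1 Set.univ + (m0 Set.univ + 1) := le_self_add
      _ = C := by rw [hC_def]; ring
  have hm0C : m0 Set.univ ≤ C := by
    calc m0 Set.univ ≤ m1 Set.univ + (m0 Set.univ + 1) := by
          exact le_add_left (le_add_right le_rfl)
      _ = C := by rw [hC_def]; ring
  have hsmall : 2 * ε * m1 Set.univ + ε ^ 2 * m0 Set.univ ≤ (δ : ENNReal) := by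
    have h1 : 2 * ε * m1 Set.univ ≤ 2 * ε * C := by gcongr
    have h2 : ε ^ 2 * m0 Set.univ ≤ ε * C := by
      calc ε ^ 2 * m0 Set.univ = ε * (ε * m0 Set.univ) := by ring
        _ ≤ ε * (1 * C) := by
            refine mul_le_mul' le_rfl (mul_le_mul' hε1 hm0C)
        _ = ε * C := by rw [one_mul]
    calc 2 * ε * m1 Set.univ + ε ^ 2 * m0 Set.univ ≤ 2 * ε * C + ε * C := add_le_add h1 h2
      _ = 3 * C * ε := by ring
      _ ≤ 3 * C * ((δ : ENNReal) / (3 * C)) := by gcongr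
      _ = (δ : ENNReal) := ENNReal.mul_div_cancel (by simp [hC0]) (ENNReal.mul_ne_top (by simp) hCt)
  calc ∫⁻ x in Ω, (m1.rnDeriv m0 x) ^ 2 ∂m0
      ≤ m2 Ω + 2 * ε * m1 Set.univ + ε ^ 2 * m0 Set.univ := step
    _ = m2 Ω + (2 * ε * m1 Set.univ + ε ^ 2 * m0 Set.univ) := by ring
    _ ≤ m2 Ω + δ := by gcongr

theorem moment_measure_radon_nikodym {K : Type*} [MetricSpace K] [CompactSpace K]
    [MeasurableSpace K] [BorelSpace K]
    (m0 m1 m2 : Measure K) [IsFiniteMeasure m0] [IsFiniteMeasure m1] [IsFiniteMeasure m2]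
    (h : ∀ Ω : Set K, MeasurableSet Ω → (m1 Ω) ^ 2 ≤ m0 Ω * m2 Ω) :
    m1 ≪ m0 ∧
    ∃ f : K → ℝ, (∀ x, 0 ≤ f x) ∧ Integrable f m0 ∧
      m1 = m0.withDensity (fun x => ENNReal.ofReal (f x)) ∧
      Integrable (fun x => f x ^ 2) m0 ∧
      (∀ Ω : Set K, MeasurableSet Ω → ∫ x in Ω, f x ^ 2 ∂m0 ≤ (m2 Ω).toReal) ∧
      ∫ x, f x ^ 2 ∂m0 ≤ (m2 Set.univ).toReal := by
  have hac : m1 ≪ m0 := by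
    refine Measure.AbsolutelyContinuous.mk fun s hs hs0 => ?_
    have := h s hs
    rw [hs0, zero_mul] at this
    exact pow_eq_zero_iff (n := 2) (by norm_num) |>.mp (le_antisymm this zero_le)
  refine ⟨hac, ?_⟩
  set g := m1.rnDeriv m0 with hg_def
  have hg : Measurable g := Measure.measurable_rnDeriv m1 m0
  have hgfin : ∀ᵐ x ∂m0, g x < ⊤ := Measure.rnDeriv_lt_top m1 m0
  set f : K → ℝ := fun x => (g x).toReal with hf_def
  have hkey := key_bound m0 m1 m2 h hac
  have hsq : ∀ x, f x ^ 2 = (g x ^ 2).toReal := fun x => (ENNReal.toReal_pow _ _).symm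
  have hlint_fin : ∫⁻ x, g x ^ 2 ∂m0 ≠ ⊤ := by
    have := hkey Set.univ MeasurableSet.univ
    rw [Measure.restrict_univ] at this
    exact ne_top_of_le_ne_top (measure_ne_top m2 _) this
  have hint2 : Integrable (fun x => f x ^ 2) m0 := by
    have := integrable_toReal_of_lintegral_ne_top (f := fun x => g x ^ 2)
      ((hg.pow_const 2).aemeasurable) hlint_fin
    simpa only [← hsq] using this
  have hΩbound : ∀ Ω : Set K, MeasurableSet Ω → ∫ x in Ω, f x ^ 2 ∂m0 ≤ (m2 Ω).toReal := by
    intro Ω hΩ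
    have heq : ∫ x in Ω, f x ^ 2 ∂m0 = (∫⁻ x in Ω, g x ^ 2 ∂m0).toReal := by
      rw [show (fun x => f x ^ 2) = fun x => (g x ^ 2).toReal from funext hsq]
      exact integral_toReal ((hg.pow_const 2).aemeasurable)
        (ae_restrict_of_ae (hgfin.mono fun x hx => ENNReal.pow_lt_top hx))
    rw [heq]
    exact ENNReal.toReal_mono (measure_ne_top m2 _) (hkey Ω hΩ)
  refine ⟨f, fun x => ENNReal.toReal_nonneg, Measure.integrable_toReal_rnDeriv, ?_, hint2,
    hΩbound, ?_⟩
  · have : m0.withDensity (fun x => ENNReal.ofReal (f x)) = m0.withDensity g := by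
      refine withDensity_congr_ae (hgfin.mono fun x hx => ?_)
      show ENNReal.ofReal ((g x).toReal) = g x
      rw [ENNReal.ofReal_toReal (ne_of_lt hx)]
    rw [this, Measure.withDensity_rnDeriv_eq m1 m0 hac]
  · have := hΩbound Set.univ MeasurableSet.univ
    rwa [Measure.restrict_univ] at this
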